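/- The solution of the backward recursion Δ_j = (λ_e + r_j Δ_c + s Δ_{j+1})/(r_j + s) for j = 1,…,k−1 with constant s > 0, r_j = j·r > 0, and boundary value Δ_k, admits the closed form Δ_1 = (λ_e/s)·Σ_{i=1}^{k−1} Π_{j=1}^{i} s/(s + j r) + Δ_c·(1 − Π_{j=1}^{k−1} s/(s+jr)) + Δ_k·Π_{j=1}^{k−1} s/(s+jr). -/
import Mathlib

private lemma stmt_15_aux (k : ℕ) (lamE r s Δc : ℝ) (hr : 0 < r) (hs : 0 < s)
    (Δ : ℕ → ℝ)
    (hrec : ∀ j, 1 ≤ j → j ≤ k - 1 →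
      Δ j = (lamE + (j : ℝ) * r * Δc + s * Δ (j + 1)) / ((j : ℝ) * r + s)) :
    ∀ d m, m + d = k → 1 ≤ m →
    Δ m = (lamE / s) *
        (∑ i ∈ Finset.Icc m (k - 1), ∏ j ∈ Finset.Icc m i, s / (s + j * r))
      + Δc * (1 - ∏ j ∈ Finset.Icc m (k - 1), s / (s + j * r))
      + Δ k * ∏ j ∈ Finset.Icc m (k - 1), s / (s + j * r) := by
  intro d
  induction d with
  | zero =>
    intro m hm _
    have : m = k := by omega
    subst this
    rw [Finset.Icc_eq_empty (by omega : ¬ m ≤ m - 1)]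
    simp
  | succ d ih =>
    intro m hm hm1
    have hmk : m ≤ k - 1 := by omega
    have hΔ := hrec m hm1 hmk
    have hnext := ih (m + 1) (by omega) (by omega)
    have hins : Finset.Icc m (k - 1) = insert m (Finset.Icc (m + 1) (k - 1)) := by
      ext x
      simp only [Finset.mem_Icc, Finset.mem_insert]
      omega
    have hnot : m ∉ Finset.Icc (m + 1) (k - 1) := by simp
    have hq0 : (0:ℝ) < s + (m:ℝ) * r := by positivity
    -- split the big product
    have hP : (∏ j ∈ Finset.Icc m (k - 1), s / (s + (j:ℝ) * r))
        = (s / (s + (m:ℝ) * r)) * ∏ j ∈ Finset.Icc (m + 1) (k - 1), s / (s + (j:ℝ) * r) := by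
      rw [hins, Finset.prod_insert hnot]
    -- split each inner product
    have hsum : (∑ i ∈ Finset.Icc m (k - 1), ∏ j ∈ Finset.Icc m i, s / (s + (j:ℝ) * r))
        = (s / (s + (m:ℝ) * r)) *
          (1 + ∑ i ∈ Finset.Icc (m + 1) (k - 1), ∏ j ∈ Finset.Icc (m + 1) i, s / (s + (j:ℝ) * r)) := by
      rw [hins, Finset.sum_insert hnot]
      have h1 : (∏ j ∈ Finset.Icc m m, s / (s + (j:ℝ) * r)) = s / (s + (m:ℝ) * r) := by
        simp
      rw [h1]
      have h2 : ∀ i ∈ Finset.Icc (m + 1) (k - 1),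
          (∏ j ∈ Finset.Icc m i, s / (s + (j:ℝ) * r))
          = (s / (s + (m:ℝ) * r)) * ∏ j ∈ Finset.Icc (m + 1) i, s / (s + (j:ℝ) * r) := by
        intro i hi
        have hmi : m + 1 ≤ i := (Finset.mem_Icc.mp hi).1
        have : Finset.Icc m i = insert m (Finset.Icc (m + 1) i) := by
          ext x
          simp only [Finset.mem_Icc, Finset.mem_insert]
          omega
        rw [this, Finset.prod_insert (by simp)]
      rw [Finset.sum_congr rfl h2, ← Finset.mul_sum]
      ring
    rw [hsum, hP, hΔ, hnext]
    have hden : (m:ℝ) * r + s ≠ 0 := by positivity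
    field_simp
    ring

/-- Closed form for the backward recursion
`Δ_j = (λe + j·r·Δc + s·Δ_{j+1})/(j·r + s)`, `j = 1,…,k−1`, with boundary `Δ_k`:
`Δ_1 = (λe/s)·Σ_{i=1}^{k−1} Π_{j=1}^{i} s/(s+jr) + Δc·(1 − Π_{j=1}^{k−1} s/(s+jr))
 + Δ_k·Π_{j=1}^{k−1} s/(s+jr)`. -/
theorem stmt_15 (k : ℕ) (hk : 2 ≤ k) (lamE r s Δc : ℝ)
    (hE : 0 < lamE) (hr : 0 < r) (hs : 0 < s)
    (Δ : ℕ → ℝ)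
    (hrec : ∀ j, 1 ≤ j → j ≤ k - 1 →
      Δ j = (lamE + (j : ℝ) * r * Δc + s * Δ (j + 1)) / ((j : ℝ) * r + s)) :
    Δ 1 = (lamE / s) *
        (∑ i ∈ Finset.Icc 1 (k - 1), ∏ j ∈ Finset.Icc 1 i, s / (s + j * r))
      + Δc * (1 - ∏ j ∈ Finset.Icc 1 (k - 1), s / (s + j * r))
      + Δ k * ∏ j ∈ Finset.Icc 1 (k - 1), s / (s + j * r) := by
  exact stmt_15_aux k lamE r s Δc hr hs Δ hrec (k - 1) 1 (by omega) le_rfl
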